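/- Let γ : 𝕋 → ℝᵐ be a C¹ immersed closed curve with unit tangent τ_γ = γ'/|γ'|, line element dℓ_γ = |γ'(x)| dx, geodesic distance ρ_γ, and for x ≠ y let I be the shorter arc joining x to y. Then 2 ρ_γ(x,y)² − 2 |γ(x) − γ(y)|² = ∫_{I×I} |τ_γ(s) − τ_γ(t)|² dℓ_γ(s) dℓ_γ(t). -/

import Mathlib

open MeasureTheory intervalIntegral

/-- **Arc identity.** Let `γ` be a `C¹` immersed curve with unit tangent
`τ_γ = γ'/|γ'|`, let `ρ` be the arclength of the (shorter) arc joining the parameters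
`x ≤ y` (here realized as the interval `[x,y]`).  Then
`2 ρ² − 2 |γ(x) − γ(y)|² = ∫_{I×I} |τ_γ(s) − τ_γ(t)|² dℓ_γ(s) dℓ_γ(t)`. -/
theorem tangent_polarization_identity {m : ℕ}
    (γ γ' : ℝ → EuclideanSpace ℝ (Fin m))
    (hderiv : ∀ t, HasDerivAt γ (γ' t) t)
    (hcont : Continuous γ')
    (himm : ∀ t, γ' t ≠ 0)
    (x y : ℝ) (hxy : x ≤ y) :
    2 * (∫ s in x..y, ‖γ' s‖) ^ 2 - 2 * ‖γ x - γ y‖ ^ 2 =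
      ∫ s in x..y, ∫ t in x..y,
        ‖(‖γ' s‖)⁻¹ • γ' s - (‖γ' t‖)⁻¹ • γ' t‖ ^ 2 * (‖γ' s‖ * ‖γ' t‖) := by
  set L : ℝ := ∫ s in x..y, ‖γ' s‖ with hL
  have hVeq : (∫ s in x..y, γ' s) = γ y - γ x :=
    integral_eq_sub_of_hasDerivAt (fun t _ => hderiv t) (hcont.intervalIntegrable x y)
  set V : EuclideanSpace ℝ (Fin m) := ∫ s in x..y, γ' s with hV
  -- pointwise identity
  have hpt : ∀ s t : ℝ,
      ‖(‖γ' s‖)⁻¹ • γ' s - (‖γ' t‖)⁻¹ • γ' t‖ ^ 2 * (‖γ' s‖ * ‖γ' t‖) =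
        2 * (‖γ' s‖ * ‖γ' t‖) - 2 * (inner ℝ (γ' s) (γ' t) : ℝ) := by
    intro s t
    have hs : ‖γ' s‖ ≠ 0 := norm_ne_zero_iff.mpr (himm s)
    have ht : ‖γ' t‖ ≠ 0 := norm_ne_zero_iff.mpr (himm t)
    have h1 : ‖(‖γ' s‖)⁻¹ • γ' s‖ = 1 := by
      rw [norm_smul, norm_inv, norm_norm, inv_mul_cancel₀ hs]
    have h2 : ‖(‖γ' t‖)⁻¹ • γ' t‖ = 1 := by
      rw [norm_smul, norm_inv, norm_norm, inv_mul_cancel₀ ht]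
    rw [norm_sub_sq_real, h1, h2, real_inner_smul_left, real_inner_smul_right]
    field_simp
    ring
  have hcn : Continuous fun t => ‖γ' t‖ := hcont.norm
  -- inner integral
  have hinner : ∀ s : ℝ,
      (∫ t in x..y, ‖(‖γ' s‖)⁻¹ • γ' s - (‖γ' t‖)⁻¹ • γ' t‖ ^ 2 * (‖γ' s‖ * ‖γ' t‖)) =
        2 * (‖γ' s‖ * L) - 2 * (inner ℝ (γ' s) V : ℝ) := by
    intro s
    have hI1 : IntervalIntegrable (fun t => 2 * (‖γ' s‖ * ‖γ' t‖)) volume x y :=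
      (continuous_const.mul (continuous_const.mul hcn)).intervalIntegrable x y
    have hI2 : IntervalIntegrable (fun t => 2 * (inner ℝ (γ' s) (γ' t) : ℝ)) volume x y :=
      (continuous_const.mul ((innerSL ℝ (γ' s)).continuous.comp hcont)).intervalIntegrable x y
    have := ((innerSL ℝ (γ' s)).intervalIntegral_comp_comm
      (hcont.intervalIntegrable x y) (a := x) (b := y) (μ := volume))
    simp only [innerSL_apply_apply] at this
    calc (∫ t in x..y, ‖(‖γ' s‖)⁻¹ • γ' s - (‖γ' t‖)⁻¹ • γ' t‖ ^ 2 * (‖γ' s‖ * ‖γ' t‖))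
        = ∫ t in x..y, (2 * (‖γ' s‖ * ‖γ' t‖) - 2 * (inner ℝ (γ' s) (γ' t) : ℝ)) := by
          simp only [hpt]
      _ = (∫ t in x..y, 2 * (‖γ' s‖ * ‖γ' t‖)) - ∫ t in x..y, 2 * (inner ℝ (γ' s) (γ' t) : ℝ) :=
          integral_sub hI1 hI2
      _ = 2 * (‖γ' s‖ * L) - 2 * (inner ℝ (γ' s) V : ℝ) := by
          rw [intervalIntegral.integral_const_mul, intervalIntegral.integral_const_mul, intervalIntegral.integral_const_mul, this]
  have houter :
      (∫ s in x..y, ∫ t in x..y,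
        ‖(‖γ' s‖)⁻¹ • γ' s - (‖γ' t‖)⁻¹ • γ' t‖ ^ 2 * (‖γ' s‖ * ‖γ' t‖)) =
        2 * (L * L) - 2 * (inner ℝ V V : ℝ) := by
    have hI1 : IntervalIntegrable (fun s => 2 * (‖γ' s‖ * L)) volume x y :=
      (continuous_const.mul (hcn.mul continuous_const)).intervalIntegrable x y
    have hI2 : IntervalIntegrable (fun s => 2 * (inner ℝ (γ' s) V : ℝ)) volume x y :=
      (continuous_const.mul (hcont.inner (continuous_const (y := V)))).intervalIntegrable x y
    have hcomm : (∫ s in x..y, (inner ℝ (γ' s) V : ℝ)) = (inner ℝ V V : ℝ) := by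
      have := ((innerSL ℝ V).intervalIntegral_comp_comm
        (hcont.intervalIntegrable x y) (a := x) (b := y) (μ := volume))
      simp only [innerSL_apply_apply] at this
      calc (∫ s in x..y, (inner ℝ (γ' s) V : ℝ))
          = ∫ s in x..y, (inner ℝ V (γ' s) : ℝ) := by
            simp only [real_inner_comm]
        _ = (inner ℝ V V : ℝ) := this
    calc (∫ s in x..y, ∫ t in x..y,
          ‖(‖γ' s‖)⁻¹ • γ' s - (‖γ' t‖)⁻¹ • γ' t‖ ^ 2 * (‖γ' s‖ * ‖γ' t‖))
        = ∫ s in x..y, (2 * (‖γ' s‖ * L) - 2 * (inner ℝ (γ' s) V : ℝ)) := by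
          simp only [hinner]
      _ = (∫ s in x..y, 2 * (‖γ' s‖ * L)) - ∫ s in x..y, 2 * (inner ℝ (γ' s) V : ℝ) :=
          integral_sub hI1 hI2
      _ = 2 * (L * L) - 2 * (inner ℝ V V : ℝ) := by
          rw [intervalIntegral.integral_const_mul, intervalIntegral.integral_const_mul, hcomm]
          congr 2
          rw [← intervalIntegral.integral_mul_const]
  rw [houter, real_inner_self_eq_norm_sq, hVeq, ← norm_neg (γ y - γ x)]
  simp [pow_two]
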